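/- For 0 < λ < μ < 1, the sum ∑_{x=1}^∞ x·P_A(x), where P_A(x) = μ[ (μ−λ)ρ^{x−1}/(λ(1−μ)) + μ(1−x)(1−μ)^{x−2} + λ(1−λ)^{x−1}/(μ−λ) + (λ²(μ−2)+2λμ−μ²)(1−μ)^{x−2}/(λ(μ−λ)) ] with ρ = (1−μ)/(1−λ), equals (λ² − μ)/(λ(λ − μ)) = 1/λ + 1/μ + λ(1−μ)/(μ(μ−λ))... i.e., the mean PAoI of the FCFS Geo/Geo/1 queue equals (μ − λ²)/(λ(μ − λ)). -/

import Mathlib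

lemma geo_h1 {q : ℝ} (hq : |q| < 1) :
    HasSum (fun n : ℕ => ((n : ℝ) + 1) * q ^ n) (1 / (1 - q) ^ 2) := by
  have := hasSum_choose_mul_geometric_of_norm_lt_one (𝕜 := ℝ) 1 (by rwa [Real.norm_eq_abs])
  simpa [Nat.choose_one_right] using this

lemma geo_h2 {q : ℝ} (hq : |q| < 1) :
    HasSum (fun n : ℕ => ((n : ℝ) + 1) * (n : ℝ) * q ^ n)
      (2 * (1 / (1 - q) ^ 3) - 2 * (1 / (1 - q) ^ 2)) := by
  have h2 := hasSum_choose_mul_geometric_of_norm_lt_one (𝕜 := ℝ) 2 (by rwa [Real.norm_eq_abs])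
  have := (h2.mul_left 2).sub ((geo_h1 hq).mul_left 2)
  convert this using 2 with n
  · rfl
  rw [Nat.cast_choose_two]
  push_cast
  ring

/-- For `0 < λ < μ < 1` and `ρ = (1−μ)/(1−λ)`, the mean of the stationary PAoI pmf of the
FCFS Geo/Geo/1 queue equals `(μ − λ²)/(λ(μ − λ))`. -/
theorem fcfs_paoi_mean (l m : ℝ) (hl0 : 0 < l) (hlm : l < m) (hm1 : m < 1)
    (r : ℝ) (hr : r = (1 - m) / (1 - l)) :
    (∑' x : ℕ, (if x = 0 then (0 : ℝ) else (x : ℝ) *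
      (m * ((m - l) * r ^ ((x : ℤ) - 1) / (l * (1 - m))
        + m * (1 - (x : ℝ)) * (1 - m) ^ ((x : ℤ) - 2)
        + l * (1 - l) ^ ((x : ℤ) - 1) / (m - l)
        + (l ^ 2 * (m - 2) + 2 * l * m - m ^ 2) * (1 - m) ^ ((x : ℤ) - 2)
            / (l * (m - l))))))
    = (m - l ^ 2) / (l * (m - l)) := by
  have hl1 : l < 1 := hlm.trans hm1
  have hm0 : (0 : ℝ) < m := hl0.trans hlm
  have hln : l ≠ 0 := ne_of_gt hl0
  have hmn : m ≠ 0 := ne_of_gt hm0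
  have h1m : (1 : ℝ) - m > 0 := by linarith
  have h1l : (1 : ℝ) - l > 0 := by linarith
  have hml : m - l > 0 := by linarith
  have h1mn : (1 : ℝ) - m ≠ 0 := ne_of_gt h1m
  have h1ln : (1 : ℝ) - l ≠ 0 := ne_of_gt h1l
  have hmln : m - l ≠ 0 := ne_of_gt hml
  have hr0 : 0 < r := by rw [hr]; positivity
  have hr1 : r < 1 := by
    rw [hr, div_lt_one h1l]; linarith
  have habsr : |r| < 1 := by rw [abs_of_pos hr0]; exact hr1
  have habsm : |1 - m| < 1 := by rw [abs_of_pos h1m]; linarith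
  have habsl : |1 - l| < 1 := by rw [abs_of_pos h1l]; linarith
  set A : ℝ := m * ((m - l) / (l * (1 - m))) with hA
  set B : ℝ := m ^ 2 / (1 - m) with hB
  set D : ℝ := m * (l / (m - l)) with hD
  set E : ℝ := m * ((l ^ 2 * (m - 2) + 2 * l * m - m ^ 2) / (l * (m - l))) / (1 - m) with hE
  have hTR : (A * (1 / (1 - r) ^ 2)
        - B * (2 * (1 / (1 - (1 - m)) ^ 3) - 2 * (1 / (1 - (1 - m)) ^ 2)))
        + (D * (1 / (1 - (1 - l)) ^ 2) + E * (1 / (1 - (1 - m)) ^ 2))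
      = (m - l ^ 2) / (l * (m - l)) := by
    have h1r : 1 - r = (m - l) / (1 - l) := by rw [hr]; field_simp; ring
    rw [hA, hB, hD, hE, h1r]
    rw [show (1:ℝ) - (1 - m) = m by ring, show (1:ℝ) - (1 - l) = l by ring]
    field_simp
    ring
  have combo :
      HasSum (fun n : ℕ =>
        (A * (((n : ℝ) + 1) * r ^ n) - B * (((n : ℝ) + 1) * (n : ℝ) * (1 - m) ^ n))
        + (D * (((n : ℝ) + 1) * (1 - l) ^ n) + E * (((n : ℝ) + 1) * (1 - m) ^ n)))
      ((m - l ^ 2) / (l * (m - l))) := by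
    rw [← hTR]
    exact (((geo_h1 habsr).mul_left A).sub ((geo_h2 habsm).mul_left B)).add
      (((geo_h1 habsl).mul_left D).add ((geo_h1 habsm).mul_left E))
  have key : HasSum (fun n : ℕ =>
      (if n + 1 = 0 then (0 : ℝ) else ((n + 1 : ℕ) : ℝ) *
      (m * ((m - l) * r ^ (((n + 1 : ℕ) : ℤ) - 1) / (l * (1 - m))
        + m * (1 - ((n + 1 : ℕ) : ℝ)) * (1 - m) ^ (((n + 1 : ℕ) : ℤ) - 2)
        + l * (1 - l) ^ (((n + 1 : ℕ) : ℤ) - 1) / (m - l)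
        + (l ^ 2 * (m - 2) + 2 * l * m - m ^ 2) * (1 - m) ^ (((n + 1 : ℕ) : ℤ) - 2)
            / (l * (m - l))))))
      ((m - l ^ 2) / (l * (m - l))) := by
    refine combo.congr_fun fun n => ?_
    rw [if_neg (Nat.succ_ne_zero n)]
    push_cast
    rw [show ((n : ℤ) + 1 - 1) = (n : ℤ) by ring,
      show ((n : ℤ) + 1 - 2) = (n : ℤ) - 1 by ring,
      zpow_natCast, zpow_natCast, zpow_sub₀ h1mn, zpow_natCast, zpow_one]
    rw [hA, hB, hD, hE]
    field_simp
    ring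
  refine ((hasSum_nat_add_iff' 1).1 ?_).tsum_eq
  simpa using key
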